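/- The tangential trace onto an edge e of the degree-p Nédélec space on a tetrahedron is exactly the space of degree-p polynomials on the edge: W¹_p(T)·t_e = P_p(e). -/

import Mathlib

open MeasureTheory

/-- Partial derivative of a scalar function on ℝ³. -/
noncomputable def pd3 (f : (Fin 3 → ℝ) → ℝ) (i : Fin 3) (x : Fin 3 → ℝ) : ℝ :=
  fderiv ℝ f x (Pi.single i 1)

/-- Curl of a vector field on ℝ³. -/
noncomputable def curl3 (u : (Fin 3 → ℝ) → (Fin 3 → ℝ)) (x : Fin 3 → ℝ) : Fin 3 → ℝ :=
  ![pd3 (fun y => u y 2) 1 x - pd3 (fun y => u y 1) 2 x,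
    pd3 (fun y => u y 0) 2 x - pd3 (fun y => u y 2) 0 x,
    pd3 (fun y => u y 1) 0 x - pd3 (fun y => u y 0) 1 x]

/-- Divergence of a vector field on ℝ³. -/
noncomputable def div3 (u : (Fin 3 → ℝ) → (Fin 3 → ℝ)) (x : Fin 3 → ℝ) : ℝ :=
  ∑ i, pd3 (fun y => u y i) i x

/-- Gradient of a scalar field on ℝ³. -/
noncomputable def grad3 (f : (Fin 3 → ℝ) → ℝ) (x : Fin 3 → ℝ) : Fin 3 → ℝ :=
  fun i => pd3 f i x

/-- Cross product in ℝ³. -/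
def cross3 (a b : Fin 3 → ℝ) : Fin 3 → ℝ :=
  ![a 1 * b 2 - a 2 * b 1, a 2 * b 0 - a 0 * b 2, a 0 * b 1 - a 1 * b 0]

/-- Euclidean dot product in ℝ³. -/
def dot3 (a b : Fin 3 → ℝ) : ℝ := ∑ i, a i * b i

/-- `f` is (given by) a polynomial of total degree ≤ p. -/
def IsPoly3 (p : ℕ) (f : (Fin 3 → ℝ) → ℝ) : Prop :=
  ∃ q : MvPolynomial (Fin 3) ℝ, q.totalDegree ≤ p ∧ ∀ x, f x = MvPolynomial.eval x q

/-- Vector field whose components are polynomials of total degree ≤ p. -/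
def IsPolyVec3 (p : ℕ) (u : (Fin 3 → ℝ) → (Fin 3 → ℝ)) : Prop :=
  ∀ i, IsPoly3 p (fun x => u x i)

/-- First-family Nédélec space of degree p (as a set of vector fields). -/
def NedelecW1 (p : ℕ) : Set ((Fin 3 → ℝ) → (Fin 3 → ℝ)) :=
  {v | ∃ P Q, IsPolyVec3 p P ∧ IsPolyVec3 p Q ∧ ∀ x, v x = P x + cross3 (Q x) x}

/-- Face-element (second family) space of degree p. -/
def NedelecW2 (p : ℕ) : Set ((Fin 3 → ℝ) → (Fin 3 → ℝ)) :=
  {v | ∃ P q, IsPolyVec3 p P ∧ IsPoly3 p q ∧ ∀ x, v x = P x + q x • x}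

/-- Poincaré lifting with center a. -/
noncomputable def Rlift (a : Fin 3 → ℝ) (u : (Fin 3 → ℝ) → (Fin 3 → ℝ))
    (x : Fin 3 → ℝ) : Fin 3 → ℝ :=
  cross3 (∫ t in (0:ℝ)..1, t • u (a + t • (x - a))) (x - a)

/-- Degree-2 Poincaré lifting with center a. -/
noncomputable def Dlift (a : Fin 3 → ℝ) (u : (Fin 3 → ℝ) → ℝ)
    (x : Fin 3 → ℝ) : Fin 3 → ℝ :=
  (∫ t in (0:ℝ)..1, t ^ 2 * u (a + t • (x - a))) • (x - a)


lemma line_comp (p : ℕ) (f : (Fin 3 → ℝ) → ℝ) (hf : IsPoly3 p f) (a t : Fin 3 → ℝ) :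
    ∃ q : Polynomial ℝ, q.natDegree ≤ p ∧ ∀ s : ℝ, f (a + s • t) = q.eval s := by
  obtain ⟨Q, hQd, hQe⟩ := hf
  set g : Fin 3 → Polynomial ℝ := fun i => Polynomial.C (a i) + Polynomial.C (t i) * Polynomial.X
    with hg
  have hgdeg : ∀ i, (g i).natDegree ≤ 1 := by
    intro i
    refine (Polynomial.natDegree_add_le _ _).trans (max_le (by simp) ?_)
    exact (Polynomial.natDegree_C_mul_le _ _).trans (by simp)
  refine ⟨MvPolynomial.aeval g Q, ?_, ?_⟩
  · conv_lhs => rw [← MvPolynomial.support_sum_monomial_coeff Q]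
    rw [map_sum]
    apply Polynomial.natDegree_sum_le_of_forall_le
    intro m hm
    rw [MvPolynomial.aeval_monomial]
    refine (Polynomial.natDegree_mul_le).trans ?_
    have h1 : ((algebraMap ℝ (Polynomial ℝ)) (MvPolynomial.coeff m Q)).natDegree = 0 := by
      simp [Polynomial.natDegree_C]
    rw [h1, zero_add]
    refine le_trans ?_ (le_trans (MvPolynomial.le_totalDegree hm) hQd)
    rw [Finsupp.prod]
    refine (Polynomial.natDegree_prod_le _ _).trans ?_
    rw [Finsupp.sum]
    apply Finset.sum_le_sum
    intro i _
    calc (g i ^ m i).natDegree ≤ m i * (g i).natDegree := Polynomial.natDegree_pow_le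
      _ ≤ m i * 1 := Nat.mul_le_mul_left _ (hgdeg i)
      _ = m i := mul_one _
  · intro s
    rw [hQe]
    have h := congrArg (fun φ => φ Q)
      (MvPolynomial.comp_aeval g (Polynomial.aeval s : Polynomial ℝ →ₐ[ℝ] ℝ))
    simp only [AlgHom.comp_apply] at h
    have h2 : Polynomial.aeval s (MvPolynomial.aeval g Q)
        = MvPolynomial.aeval (fun i => Polynomial.aeval s (g i)) Q := h
    have h3 : (fun i => Polynomial.aeval s (g i)) = fun i => (a + s • t) i := by
      funext i
      simp only [hg, map_add, map_mul, Polynomial.aeval_C, Polynomial.aeval_X, Pi.add_apply,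
        Pi.smul_apply, smul_eq_mul, Algebra.algebraMap_self, RingHom.id_apply]
      ring
    rw [h3] at h2
    have h4 : Polynomial.aeval s (MvPolynomial.aeval g Q)
        = Polynomial.eval s (MvPolynomial.aeval g Q) := by simp
    have h5 : MvPolynomial.aeval (fun i => (a + s • t) i) Q
        = MvPolynomial.eval (a + s • t) Q := by
      rfl
    rw [h4, h5] at h2
    exact h2.symm

lemma dot3_t_one (a b : Fin 3 → ℝ) (hab : a ≠ b) (t : Fin 3 → ℝ)
    (ht : t = (Real.sqrt (dot3 (b - a) (b - a)))⁻¹ • (b - a)) : dot3 t t = 1 := by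
  set d := dot3 (b - a) (b - a) with hd
  have hdpos : 0 < d := by
    obtain ⟨i, hi⟩ := Function.ne_iff.mp hab
    rw [hd]
    unfold dot3
    apply Finset.sum_pos'
    · intro j _; exact mul_self_nonneg _
    · refine ⟨i, Finset.mem_univ i, mul_self_pos.mpr ?_⟩
      simpa [Pi.sub_apply, sub_ne_zero] using Ne.symm hi
  have hsq : Real.sqrt d * Real.sqrt d = d := Real.mul_self_sqrt hdpos.le
  have hs0 : Real.sqrt d ≠ 0 := ne_of_gt (Real.sqrt_pos.mpr hdpos)
  have h1 : dot3 t t = (Real.sqrt d)⁻¹ * (Real.sqrt d)⁻¹ * d := by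
    rw [ht, hd]
    simp only [dot3, Fin.sum_univ_three, Pi.smul_apply, smul_eq_mul, Pi.sub_apply]
    ring
  rw [h1, ← hsq]
  field_simp
  rw [Real.sqrt_sq (Real.sqrt_nonneg _)]

/-- The tangential trace of `W¹_p(T)` onto an edge `e = [a,b]`
(with unit tangent `t_e`, arclength parametrization `s ↦ a + s t_e`) is exactly
the space of univariate polynomials of degree ≤ p. -/
theorem nedelecW1_edge_trace (p : ℕ) (a b : Fin 3 → ℝ) (hab : a ≠ b)
    (t : Fin 3 → ℝ) (ht : t = (Real.sqrt (dot3 (b - a) (b - a)))⁻¹ • (b - a)) :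
    {g : ℝ → ℝ | ∃ v ∈ NedelecW1 p, ∀ s : ℝ, g s = dot3 (v (a + s • t)) t} =
      {g : ℝ → ℝ | ∃ q : Polynomial ℝ, q.natDegree ≤ p ∧ ∀ s, g s = q.eval s} := by
  have htt : dot3 t t = 1 := dot3_t_one a b hab t ht
  have htt' : t 0 * t 0 + t 1 * t 1 + t 2 * t 2 = 1 := by
    have := htt; simpa [dot3, Fin.sum_univ_three] using this
  ext g
  simp only [Set.mem_setOf_eq]
  constructor
  · rintro ⟨v, ⟨P, Q, hP, hQ, hv⟩, hg⟩
    obtain ⟨p0, hp0d, hp0⟩ := line_comp p _ (hP 0) a t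
    obtain ⟨p1, hp1d, hp1⟩ := line_comp p _ (hP 1) a t
    obtain ⟨p2, hp2d, hp2⟩ := line_comp p _ (hP 2) a t
    obtain ⟨q0, hq0d, hq0⟩ := line_comp p _ (hQ 0) a t
    obtain ⟨q1, hq1d, hq1⟩ := line_comp p _ (hQ 1) a t
    obtain ⟨q2, hq2d, hq2⟩ := line_comp p _ (hQ 2) a t
    refine ⟨Polynomial.C (t 0) * p0 + Polynomial.C (t 1) * p1 + Polynomial.C (t 2) * p2
      + Polynomial.C (t 2 * a 1 - t 1 * a 2) * q0
      + Polynomial.C (t 0 * a 2 - t 2 * a 0) * q1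
      + Polynomial.C (t 1 * a 0 - t 0 * a 1) * q2, ?_, ?_⟩
    · refine (Polynomial.natDegree_add_le _ _).trans (max_le ?_
        ((Polynomial.natDegree_C_mul_le _ _).trans hq2d))
      refine (Polynomial.natDegree_add_le _ _).trans (max_le ?_
        ((Polynomial.natDegree_C_mul_le _ _).trans hq1d))
      refine (Polynomial.natDegree_add_le _ _).trans (max_le ?_
        ((Polynomial.natDegree_C_mul_le _ _).trans hq0d))
      refine (Polynomial.natDegree_add_le _ _).trans (max_le ?_
        ((Polynomial.natDegree_C_mul_le _ _).trans hp2d))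
      refine (Polynomial.natDegree_add_le _ _).trans (max_le
        ((Polynomial.natDegree_C_mul_le _ _).trans hp0d)
        ((Polynomial.natDegree_C_mul_le _ _).trans hp1d))
    · intro s
      rw [hg s, hv]
      simp only [dot3, cross3, Fin.sum_univ_three, Pi.add_apply, Pi.smul_apply, smul_eq_mul,
        Matrix.cons_val_zero, Matrix.cons_val_one, Matrix.head_cons, Matrix.cons_val_two,
        Matrix.tail_cons, Polynomial.eval_add,
        Polynomial.eval_mul, Polynomial.eval_C]
      rw [hp0 s, hp1 s, hp2 s, hq0 s, hq1 s, hq2 s]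
      ring
  · rintro ⟨q, hqd, hg⟩
    set L : MvPolynomial (Fin 3) ℝ :=
      (∑ j : Fin 3, MvPolynomial.C (t j) * MvPolynomial.X j)
        + MvPolynomial.C (-(∑ j : Fin 3, t j * a j)) with hL
    have hLdeg : L.totalDegree ≤ 1 := by
      refine (MvPolynomial.totalDegree_add _ _).trans (max_le ?_
        ((MvPolynomial.totalDegree_C _).le.trans (Nat.zero_le 1)))
      refine (MvPolynomial.totalDegree_finset_sum _ _).trans (Finset.sup_le fun j _ => ?_)
      refine (MvPolynomial.totalDegree_mul _ _).trans ?_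
      simp [MvPolynomial.totalDegree_X]
    set m : MvPolynomial (Fin 3) ℝ := Polynomial.aeval L q with hm
    have hmdeg : m.totalDegree ≤ p := by
      rw [hm, Polynomial.aeval_eq_sum_range]
      refine (MvPolynomial.totalDegree_finset_sum _ _).trans (Finset.sup_le fun i hi => ?_)
      refine (MvPolynomial.totalDegree_smul_le _ _).trans ?_
      refine (MvPolynomial.totalDegree_pow _ _).trans ?_
      calc i * L.totalDegree ≤ i * 1 := Nat.mul_le_mul_left _ hLdeg
        _ = i := mul_one _
        _ ≤ q.natDegree := Nat.lt_succ_iff.mp (Finset.mem_range.mp hi)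
        _ ≤ p := hqd
    have hmev : ∀ s : ℝ, MvPolynomial.eval (a + s • t) m = q.eval s := by
      intro s
      have h1 : Polynomial.aeval (MvPolynomial.aeval (a + s • t) L) q
          = MvPolynomial.aeval (a + s • t) (Polynomial.aeval L q) :=
        Polynomial.aeval_algHom_apply (MvPolynomial.aeval (a + s • t)) L q
      have h2 : (MvPolynomial.aeval (a + s • t) : MvPolynomial (Fin 3) ℝ →ₐ[ℝ] ℝ)
          = MvPolynomial.eval (a + s • t) := rfl
      have h3 : MvPolynomial.eval (a + s • t) L = s := by
        rw [hL]
        simp only [map_add, map_sum, map_mul, MvPolynomial.eval_C, MvPolynomial.eval_X,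
          Fin.sum_univ_three, Pi.add_apply, Pi.smul_apply, smul_eq_mul]
        linear_combination s * htt'
      have h4 : (Polynomial.aeval (s : ℝ) : Polynomial ℝ →ₐ[ℝ] ℝ) q = q.eval s := by simp
      have h5 : MvPolynomial.eval (a + s • t) (Polynomial.aeval L q)
          = Polynomial.aeval (MvPolynomial.eval (a + s • t) L) q := h1.symm
      rw [hm, h5, h3]
      exact h4
    refine ⟨fun x => (MvPolynomial.eval x m) • t, ⟨fun x => (MvPolynomial.eval x m) • t,
      fun _ _ => 0, ?_, ?_, ?_⟩, ?_⟩
    · intro i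
      exact ⟨MvPolynomial.C (t i) * m,
        (MvPolynomial.totalDegree_mul _ _).trans (by simpa using hmdeg),
        fun x => by simp [mul_comm]⟩
    · intro i
      exact ⟨0, by simp, fun x => by simp⟩
    · intro x
      funext i
      fin_cases i <;> simp [cross3]
    · intro s
      rw [hg s, ← hmev s]
      simp only [dot3, Fin.sum_univ_three, Pi.smul_apply, smul_eq_mul]
      linear_combination (-(MvPolynomial.eval (a + s • t) m)) * htt'
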